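/- Let ς be a random vector in ℝⁿ with finite fourth moment, mean μ and covariance Σ, satisfying the fourth-moment identity E[‖ς‖⁴] = ‖Σ‖_F² + 2(Tr Σ)² + 4 μᵀΣμ + ‖μ‖⁴, and suppose μμᵀ ⪯ Γ_μ and Σ ⪯ Γ_Σ for symmetric positive semidefinite matrices Γ_μ, Γ_Σ. Let Z¹, …, Z^N be independent random vectors each with the same law as ς, and let ε > 0. Then with probability at least 1 − (2/(N ε²)) · ( (Tr Γ_Σ)² + λmax(Γ_Σ) · Tr Γ_μ ), the empirical second-moment matrix satisfies (1/N) Σ_{i=1}^N Zⁱ(Zⁱ)ᵀ ⪯ Γ_Σ + Γ_μ + ε Iₙ. -/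

import Mathlib

open MeasureTheory ProbabilityTheory Matrix

/-- Euclidean norm of a vector in `ℝⁿ`. -/
noncomputable def euclNorm {n : ℕ} (x : Fin n → ℝ) : ℝ := Real.sqrt (∑ i, (x i) ^ 2)

/-- Frobenius norm of a real matrix. -/
noncomputable def frobNorm {n m : ℕ} (A : Matrix (Fin n) (Fin m) ℝ) : ℝ :=
  Real.sqrt (∑ i, ∑ j, (A i j) ^ 2)

/-- Largest eigenvalue of a real symmetric matrix. -/
noncomputable def lamMax {n : ℕ} {A : Matrix (Fin n) (Fin n) ℝ} (hA : A.IsHermitian) : ℝ :=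
  ⨆ i, hA.eigenvalues i

lemma aux_rayleigh {n : ℕ} {A : Matrix (Fin n) (Fin n) ℝ} (hA : A.IsHermitian)
    (x : Fin n → ℝ) : x ⬝ᵥ A *ᵥ x ≤ lamMax hA * (x ⬝ᵥ x) := by
  classical
  set U : Matrix (Fin n) (Fin n) ℝ := (hA.eigenvectorUnitary : Matrix (Fin n) (Fin n) ℝ) with hU
  have hstar : star U = Uᵀ := by
    rw [Matrix.star_eq_conjTranspose]
    ext i j; simp [Matrix.conjTranspose_apply]
  have hUU : U * Uᵀ = 1 := by
    rw [← hstar]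
    exact (Matrix.mem_unitaryGroup_iff).mp hA.eigenvectorUnitary.2
  have hofReal : (RCLike.ofReal ∘ hA.eigenvalues : Fin n → ℝ) = hA.eigenvalues := rfl
  set y : Fin n → ℝ := Uᵀ *ᵥ x with hy
  have hdot : ∀ (M : Matrix (Fin n) (Fin n) ℝ) (w : Fin n → ℝ),
      x ⬝ᵥ (M *ᵥ w) = (Mᵀ *ᵥ x) ⬝ᵥ w := fun M w => by
    rw [dotProduct_mulVec, Matrix.mulVec_transpose]
  have h1 : x ⬝ᵥ A *ᵥ x = ∑ i, hA.eigenvalues i * (y i * y i) := by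
    conv_lhs => rw [hA.spectral_theorem]
    rw [Unitary.conjStarAlgAut_apply, ← hU, ← Matrix.mulVec_mulVec, ← Matrix.mulVec_mulVec, hdot, hstar, hofReal]
    simp [dotProduct, Matrix.mulVec_diagonal, hy]
    exact Finset.sum_congr rfl fun i _ => by ring
  have h2 : y ⬝ᵥ y = x ⬝ᵥ x := by
    have : y ⬝ᵥ y = x ⬝ᵥ ((U * Uᵀ) *ᵥ x) := by
      rw [← Matrix.mulVec_mulVec, hdot, hy]
    rw [this, hUU, Matrix.one_mulVec]
  have hb : ∀ i, hA.eigenvalues i ≤ lamMax hA := fun i =>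
    le_ciSup (Set.Finite.bddAbove (Set.finite_range _)) i
  calc x ⬝ᵥ A *ᵥ x = ∑ i, hA.eigenvalues i * (y i * y i) := h1
    _ ≤ ∑ i, lamMax hA * (y i * y i) := by
        refine Finset.sum_le_sum fun i _ => ?_
        exact mul_le_mul_of_nonneg_right (hb i) (mul_self_nonneg _)
    _ = lamMax hA * (y ⬝ᵥ y) := by rw [dotProduct, Finset.mul_sum]
    _ = lamMax hA * (x ⬝ᵥ x) := by rw [h2]

lemma aux_lamMax_nonneg {n : ℕ} {A : Matrix (Fin n) (Fin n) ℝ} (hA : A.PosSemidef) :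
    0 ≤ lamMax hA.isHermitian := by
  rcases Nat.eq_zero_or_pos n with h | h
  · subst h
    rw [lamMax, Real.iSup_of_isEmpty]
  · exact le_trans (hA.eigenvalues_nonneg ⟨0, h⟩)
      (le_ciSup (Set.Finite.bddAbove (Set.finite_range _)) _)

lemma aux_frob_quad {n : ℕ} {D : Matrix (Fin n) (Fin n) ℝ} {ε : ℝ} (hε : 0 ≤ ε)
    (hD : ∑ i, ∑ j, (D i j)^2 ≤ ε^2) (x : Fin n → ℝ) :
    x ⬝ᵥ D *ᵥ x ≤ ε * (x ⬝ᵥ x) := by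
  classical
  set S := ∑ i, x i ^ 2 with hS
  have hSeq : x ⬝ᵥ x = S := by simp [dotProduct, hS, pow_two]
  have hS0 : 0 ≤ S := Finset.sum_nonneg fun i _ => sq_nonneg _
  have hrow : ∀ i, (D *ᵥ x) i ^ 2 ≤ (∑ j, (D i j)^2) * S := fun i => by
    have := Finset.sum_mul_sq_le_sq_mul_sq Finset.univ (fun j => D i j) x
    simpa [Matrix.mulVec, dotProduct, hS] using this
  have hcs : (x ⬝ᵥ D *ᵥ x)^2 ≤ S * ((∑ i, ∑ j, (D i j)^2) * S) := by
    have h1 := Finset.sum_mul_sq_le_sq_mul_sq Finset.univ x (fun i => (D *ᵥ x) i)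
    have h2 : ∑ i, (D *ᵥ x) i ^ 2 ≤ (∑ i, ∑ j, (D i j)^2) * S := by
      calc ∑ i, (D *ᵥ x) i ^ 2 ≤ ∑ i, (∑ j, (D i j)^2) * S := Finset.sum_le_sum fun i _ => hrow i
        _ = (∑ i, ∑ j, (D i j)^2) * S := by rw [Finset.sum_mul]
    calc (x ⬝ᵥ D *ᵥ x)^2 ≤ (∑ i, x i ^2) * (∑ i, (D *ᵥ x) i ^2) := by
          simpa [dotProduct] using h1
      _ ≤ S * ((∑ i, ∑ j, (D i j)^2) * S) :=
          mul_le_mul (le_of_eq hS.symm) h2 (Finset.sum_nonneg fun i _ => sq_nonneg _) hS0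
  have hbound : (x ⬝ᵥ D *ᵥ x)^2 ≤ (ε * S)^2 := by
    calc (x ⬝ᵥ D *ᵥ x)^2 ≤ S * ((∑ i, ∑ j, (D i j)^2) * S) := hcs
      _ ≤ S * (ε^2 * S) :=
          mul_le_mul_of_nonneg_left (mul_le_mul_of_nonneg_right hD hS0) hS0
      _ = (ε * S)^2 := by ring
  rw [hSeq]
  calc x ⬝ᵥ D *ᵥ x ≤ |x ⬝ᵥ D *ᵥ x| := le_abs_self _
    _ = Real.sqrt ((x ⬝ᵥ D *ᵥ x)^2) := (Real.sqrt_sq_eq_abs _).symm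
    _ ≤ Real.sqrt ((ε * S)^2) := Real.sqrt_le_sqrt hbound
    _ = ε * S := by rw [Real.sqrt_sq_eq_abs, abs_of_nonneg (mul_nonneg hε hS0)]

lemma aux_avg_dev_sq {N : ℕ} (hN : 0 < N) {Ω : Type*} [MeasurableSpace Ω] {P : Measure Ω}
    [IsProbabilityMeasure P] (W : Fin N → Ω → ℝ)
    (hindep : ∀ k l, k ≠ l → IndepFun (W k) (W l) P)
    (hint : ∀ k, Integrable (W k) P)
    (hint2 : ∀ k, Integrable (fun ω => W k ω * W k ω) P)
    (m q : ℝ) (hm : ∀ k, ∫ ω, W k ω ∂P = m) (hq : ∀ k, ∫ ω, W k ω * W k ω ∂P = q) :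
    Integrable (fun ω => ((N:ℝ)⁻¹ * (∑ k, W k ω) - m)^2) P ∧
    ∫ ω, ((N:ℝ)⁻¹ * (∑ k, W k ω) - m)^2 ∂P = (q - m * m) / N := by
  classical
  have hNne : (N:ℝ) ≠ 0 := Nat.cast_ne_zero.mpr hN.ne'
  have hkl : ∀ k l, Integrable (fun ω => W k ω * W l ω) P := fun k l => by
    by_cases h : k = l
    · subst h; exact hint2 k
    · exact (hindep k l h).integrable_mul (hint k) (hint l)
  have hklval : ∀ k l, ∫ ω, W k ω * W l ω ∂P = (m*m) + (if k = l then q - m*m else 0) := by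
    intro k l
    by_cases h : k = l
    · subst h; rw [hq k]; simp
    · have h1 := IndepFun.integral_mul_eq_mul_integral (hindep k l h) (hint k).1 (hint l).1
      simp only [Pi.mul_apply] at h1
      rw [if_neg h]
      calc ∫ ω, W k ω * W l ω ∂P = (∫ ω, W k ω ∂P) * ∫ ω, W l ω ∂P := h1
        _ = m * m + 0 := by rw [hm k, hm l, add_zero]
  have hT2eq : (fun ω => (∑ k, W k ω)^2) = fun ω => ∑ k, ∑ l, W k ω * W l ω := by
    funext ω; rw [sq, Finset.sum_mul_sum]
  have hT2int : Integrable (fun ω => (∑ k, W k ω)^2) P := by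
    rw [hT2eq]
    exact integrable_finset_sum _ fun k _ => integrable_finset_sum _ fun l _ => hkl k l
  have hTint : Integrable (fun ω => ∑ k, W k ω) P :=
    integrable_finset_sum _ fun k _ => hint k
  have hTmean : ∫ ω, ∑ k, W k ω ∂P = N * m := by
    rw [integral_finset_sum _ fun k _ => hint k]
    simp [hm, Finset.sum_const, Finset.card_univ, mul_comm]
  have hT2val : ∫ ω, (∑ k, W k ω)^2 ∂P = N * q + ((N:ℝ)^2 - N) * (m*m) := by
    rw [hT2eq, integral_finset_sum _ (fun k _ => integrable_finset_sum _ fun l _ => hkl k l)]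
    have : ∀ k : Fin N, ∫ ω, ∑ l, W k ω * W l ω ∂P = ∑ l, ∫ ω, W k ω * W l ω ∂P :=
      fun k => integral_finset_sum _ fun l _ => hkl k l
    rw [Finset.sum_congr rfl fun k _ => this k]
    rw [Finset.sum_congr rfl fun k _ => Finset.sum_congr rfl fun l _ => hklval k l]
    simp [Finset.sum_add_distrib, Finset.sum_ite_eq, Finset.card_univ]
    ring
  have hdecomp : (fun ω => ((N:ℝ)⁻¹ * (∑ k, W k ω) - m)^2)
      = fun ω => ((N:ℝ)⁻¹)^2 * ((∑ k, W k ω)^2) - (2 * (N:ℝ)⁻¹ * m) * (∑ k, W k ω) + m^2 := by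
    funext ω; ring
  constructor
  · rw [hdecomp]
    exact ((hT2int.const_mul _).sub (hTint.const_mul _)).add (integrable_const _)
  · rw [hdecomp]
    have hi1 : Integrable (fun ω => ((N:ℝ)⁻¹)^2 * ((∑ k, W k ω)^2)
        - (2 * (N:ℝ)⁻¹ * m) * (∑ k, W k ω)) P := (hT2int.const_mul _).sub (hTint.const_mul _)
    rw [integral_add hi1 (integrable_const _),
      integral_sub (hT2int.const_mul _) (hTint.const_mul _),
      integral_const_mul, integral_const_mul, hT2val, hTmean]
    simp only [measure_univ, ENNReal.toReal_one, smul_eq_mul, one_mul, integral_const, probReal_univ]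
    field_simp
    ring

/-- **(Statement 6)** With probability at least
`1 − (2/(N ε²))((Tr Γ_Σ)² + λmax(Γ_Σ) Tr Γ_μ)`, the empirical second-moment matrix satisfies
`(1/N) Σᵢ Zⁱ(Zⁱ)ᵀ ⪯ Γ_Σ + Γ_μ + ε Iₙ`. -/
theorem empirical_second_moment_loewner_bound
    {n N : ℕ} (hN : 0 < N)
    {Ω : Type*} [MeasurableSpace Ω] {P : Measure Ω} [IsProbabilityMeasure P]
    -- the random vector ς, with finite fourth moment
    (ς : Ω → Fin n → ℝ) (hςmeas : Measurable ς)
    (hint1 : ∀ i, Integrable (fun ω => ς ω i) P)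
    (hint2 : ∀ i j, Integrable (fun ω => ς ω i * ς ω j) P)
    (hint4 : ∀ i j k l, Integrable (fun ω => ς ω i * ς ω j * (ς ω k * ς ω l)) P)
    (hintnorm4 : Integrable (fun ω => euclNorm (ς ω) ^ 4) P)
    -- mean and covariance
    (μ : Fin n → ℝ) (hμ : ∀ i, μ i = ∫ ω, ς ω i ∂P)
    (Sm : Matrix (Fin n) (Fin n) ℝ)
    (hSm : ∀ i j, Sm i j = ∫ ω, (ς ω i - μ i) * (ς ω j - μ j) ∂P)
    -- the fourth-moment identity
    (h4 : ∫ ω, euclNorm (ς ω) ^ 4 ∂P =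
      frobNorm Sm ^ 2 + 2 * Sm.trace ^ 2 + 4 * (μ ⬝ᵥ Sm.mulVec μ) + euclNorm μ ^ 4)
    -- the bounding matrices
    (Gm GS : Matrix (Fin n) (Fin n) ℝ)
    (hGm : Gm.PosSemidef) (hGS : GS.PosSemidef)
    (hμbd : (Gm - vecMulVec μ μ).PosSemidef)
    (hSmbd : (GS - Sm).PosSemidef)
    -- the independent samples, each with the same law as ς
    (Z : Fin N → Ω → Fin n → ℝ) (hZmeas : ∀ i, Measurable (Z i))
    (hZindep : iIndepFun Z P)
    (hZlaw : ∀ i, Measure.map (Z i) P = Measure.map ς P)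
    (ε : ℝ) (hε : 0 < ε) :
    1 - 2 / (N * ε ^ 2) * (GS.trace ^ 2 + lamMax hGS.isHermitian * Gm.trace) ≤
      (P {ω | (GS + Gm + ε • (1 : Matrix (Fin n) (Fin n) ℝ)
        - (N : ℝ)⁻¹ • ∑ i, vecMulVec (Z i ω) (Z i ω)).PosSemidef}).toReal := by
  classical
  have hNne : (N:ℝ) ≠ 0 := Nat.cast_ne_zero.mpr hN.ne'
  have hNpos : (0:ℝ) < N := Nat.cast_pos.mpr hN
  have hZm : ∀ (k : Fin N) (i : Fin n), Measurable fun ω => Z k ω i :=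
    fun k i => (measurable_pi_apply i).comp (hZmeas k)
  have mφ : ∀ i j : Fin n, Measurable fun v : Fin n → ℝ => v i * v j :=
    fun i j => (measurable_pi_apply i).mul (measurable_pi_apply j)
  -- transfer of integrability and integrals along equality of laws
  have law_int : ∀ (k : Fin N) (φ : (Fin n → ℝ) → ℝ), Measurable φ →
      Integrable (fun ω => φ (ς ω)) P → Integrable (fun ω => φ (Z k ω)) P := by
    intro k φ hφ hι
    have h1 : Integrable φ (Measure.map ς P) :=
      (integrable_map_measure hφ.aestronglyMeasurable hςmeas.aemeasurable).mpr hι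
    have h2 : Integrable φ (Measure.map (Z k) P) := (hZlaw k) ▸ h1
    exact (integrable_map_measure hφ.aestronglyMeasurable (hZmeas k).aemeasurable).mp h2
  have law_eq : ∀ (k : Fin N) (φ : (Fin n → ℝ) → ℝ), Measurable φ →
      ∫ ω, φ (Z k ω) ∂P = ∫ ω, φ (ς ω) ∂P := by
    intro k φ hφ
    rw [← integral_map (hZmeas k).aemeasurable hφ.aestronglyMeasurable, hZlaw k,
      integral_map hςmeas.aemeasurable hφ.aestronglyMeasurable]
  set m : Fin n → Fin n → ℝ := fun i j => ∫ ω, ς ω i * ς ω j ∂P with hmdef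
  set q : Fin n → Fin n → ℝ := fun i j => ∫ ω, ς ω i * ς ω j * (ς ω i * ς ω j) ∂P with hqdef
  -- per entry variance of the empirical mean
  have hW : ∀ i j : Fin n,
      Integrable (fun ω => ((N:ℝ)⁻¹ * (∑ k, Z k ω i * Z k ω j) - m i j)^2) P ∧
      ∫ ω, ((N:ℝ)⁻¹ * (∑ k, Z k ω i * Z k ω j) - m i j)^2 ∂P
        = (q i j - m i j * m i j)/N := by
    intro i j
    refine aux_avg_dev_sq hN (fun k ω => Z k ω i * Z k ω j) ?_ ?_ ?_ (m i j) (q i j) ?_ ?_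
    · intro k l hkl; exact (hZindep.indepFun hkl).comp (mφ i j) (mφ i j)
    · intro k; exact law_int k _ (mφ i j) (hint2 i j)
    · intro k
      exact law_int k (fun v => v i * v j * (v i * v j)) ((mφ i j).mul (mφ i j)) (hint4 i j i j)
    · intro k; exact law_eq k _ (mφ i j)
    · intro k; exact law_eq k (fun v => v i * v j * (v i * v j)) ((mφ i j).mul (mφ i j))
  have hgint : Integrable
      (fun ω => ∑ i, ∑ j, ((N:ℝ)⁻¹ * (∑ k, Z k ω i * Z k ω j) - m i j)^2) P :=
    integrable_finset_sum _ fun i _ => integrable_finset_sum _ fun j _ => (hW i j).1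
  have hgmeas : Measurable
      (fun ω => ∑ i, ∑ j, ((N:ℝ)⁻¹ * (∑ k, Z k ω i * Z k ω j) - m i j)^2) := by
    refine Finset.measurable_sum _ fun i _ => Finset.measurable_sum _ fun j _ => ?_
    exact ((measurable_const.mul
      (Finset.measurable_sum _ fun k _ => (hZm k i).mul (hZm k j))).sub
        measurable_const).pow_const 2
  -- m in terms of Sm and μ
  have hm_eq : ∀ i j, m i j = Sm i j + μ i * μ j := by
    intro i j
    have hpt : (fun ω => (ς ω i - μ i) * (ς ω j - μ j))
        = fun ω => ς ω i * ς ω j - μ i * (ς ω j) - μ j * (ς ω i) + μ i * μ j := by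
      funext ω; ring
    have h2 := hint2 i j
    have hii : Integrable (fun ω => ς ω i * ς ω j - μ i * ς ω j - μ j * ς ω i) P :=
      (h2.sub ((hint1 j).const_mul _)).sub ((hint1 i).const_mul _)
    have hkey : Sm i j = m i j - μ i * μ j := by
      have hii2 : Integrable (fun ω => ς ω i * ς ω j - μ i * ς ω j) P :=
        h2.sub ((hint1 j).const_mul _)
      rw [hSm i j, hpt, integral_add hii (integrable_const _),
        integral_sub hii2 ((hint1 i).const_mul _),
        integral_sub h2 ((hint1 j).const_mul _), integral_const_mul, integral_const_mul,
        integral_const]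
      simp only [measure_univ, ENNReal.toReal_one, smul_eq_mul, one_mul, probReal_univ]
      rw [← hμ i, ← hμ j, hmdef]
      ring
    rw [hkey]; ring
  -- sum of q equals fourth moment
  have hq_sum : ∑ i, ∑ j, q i j = ∫ ω, euclNorm (ς ω)^4 ∂P := by
    have h1 : ∀ i : Fin n, ∑ j, q i j = ∫ ω, ∑ j, ς ω i * ς ω j * (ς ω i * ς ω j) ∂P :=
      fun i => (integral_finset_sum _ fun j _ => hint4 i j i j).symm
    rw [Finset.sum_congr rfl fun i _ => h1 i,
      ← integral_finset_sum _ (fun i _ => integrable_finset_sum _ fun j _ => hint4 i j i j)]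
    refine integral_congr_ae (ae_of_all _ fun ω => ?_)
    have hs : (0:ℝ) ≤ ∑ i, ς ω i^2 := Finset.sum_nonneg fun i _ => sq_nonneg _
    simp only [euclNorm]
    rw [show (4:ℕ) = 2*2 from rfl, pow_mul, Real.sq_sqrt hs, sq, Finset.sum_mul_sum]
    exact Finset.sum_congr rfl fun i _ => Finset.sum_congr rfl fun j _ => by ring
  -- sum of m² in terms of Sm and μ
  have e1 : frobNorm Sm^2 = ∑ i, ∑ j, Sm i j^2 := by
    rw [frobNorm]
    exact Real.sq_sqrt (Finset.sum_nonneg fun i _ => Finset.sum_nonneg fun j _ => sq_nonneg _)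
  have e2 : euclNorm μ^4 = ∑ i, ∑ j, μ i^2 * μ j^2 := by
    have hs : (0:ℝ) ≤ ∑ i, μ i^2 := Finset.sum_nonneg fun i _ => sq_nonneg _
    simp only [euclNorm]
    rw [show (4:ℕ) = 2*2 from rfl, pow_mul, Real.sq_sqrt hs, sq, Finset.sum_mul_sum]
  have e3 : μ ⬝ᵥ Sm *ᵥ μ = ∑ i, ∑ j, μ i * Sm i j * μ j := by
    simp [dotProduct, Matrix.mulVec, Finset.mul_sum, mul_assoc]
  have hm_sum : ∑ i, ∑ j, m i j * m i j
      = frobNorm Sm^2 + 2*(μ ⬝ᵥ Sm *ᵥ μ) + euclNorm μ^4 := by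
    have : ∑ i, ∑ j, m i j * m i j
        = ∑ i, ∑ j, (Sm i j^2 + 2*(μ i * Sm i j * μ j) + μ i^2 * μ j^2) :=
      Finset.sum_congr rfl fun i _ => Finset.sum_congr rfl fun j _ => by
        rw [hm_eq i j]; ring
    rw [this, e1, e2, e3]
    simp [Finset.sum_add_distrib, Finset.mul_sum]
  -- the total variance
  have hgval : ∫ ω, ∑ i, ∑ j, ((N:ℝ)⁻¹ * (∑ k, Z k ω i * Z k ω j) - m i j)^2 ∂P
      = (2 * Sm.trace^2 + 2*(μ ⬝ᵥ Sm *ᵥ μ))/N := by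
    rw [integral_finset_sum _ (fun i _ => integrable_finset_sum _ fun j _ => (hW i j).1)]
    rw [Finset.sum_congr rfl fun i (_ : i ∈ Finset.univ) =>
      (integral_finset_sum _ fun j _ => (hW i j).1 : _)]
    rw [Finset.sum_congr rfl fun i _ => Finset.sum_congr rfl fun j _ => (hW i j).2]
    have : ∑ i, ∑ j, (q i j - m i j * m i j)/(N:ℝ)
        = ((∑ i, ∑ j, q i j) - ∑ i, ∑ j, m i j * m i j)/N := by
      simp only [div_eq_mul_inv, ← Finset.sum_mul, Finset.sum_sub_distrib]
    rw [this, hq_sum, hm_sum, h4]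
    ring
  -- trace facts
  have hdiag : ∀ (A : Matrix (Fin n) (Fin n) ℝ), A.PosSemidef → ∀ i, 0 ≤ A i i := by
    intro A hA i
    have h := hA.dotProduct_mulVec_nonneg (Pi.single i 1)
    simpa [dotProduct, Matrix.mulVec, Pi.single_apply, Finset.sum_ite_eq] using h
  have htrSm0 : 0 ≤ Sm.trace := by
    have : Sm.trace = ∑ i, Sm i i := by simp [Matrix.trace, Matrix.diag]
    rw [this]
    refine Finset.sum_nonneg fun i _ => ?_
    rw [hSm i i]
    exact integral_nonneg fun ω => mul_self_nonneg _
  have htrGS : Sm.trace ≤ GS.trace := by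
    have h := Finset.sum_nonneg (s := Finset.univ) fun i (_ : i ∈ Finset.univ) => hdiag _ hSmbd i
    simp only [Matrix.sub_apply, Finset.sum_sub_distrib] at h
    have h1 : Sm.trace = ∑ i, Sm i i := by simp [Matrix.trace, Matrix.diag]
    have h2 : GS.trace = ∑ i, GS i i := by simp [Matrix.trace, Matrix.diag]
    rw [h1, h2]; linarith
  have hlam0 : 0 ≤ lamMax hGS.isHermitian := aux_lamMax_nonneg hGS
  have htrGm : ∑ i, μ i * μ i ≤ Gm.trace := by
    have h := Finset.sum_nonneg (s := Finset.univ) fun i (_ : i ∈ Finset.univ) => hdiag _ hμbd i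
    simp only [Matrix.sub_apply, Matrix.vecMulVec_apply, Finset.sum_sub_distrib] at h
    have h2 : Gm.trace = ∑ i, Gm i i := by simp [Matrix.trace, Matrix.diag]
    rw [h2]; linarith
  have htrGm0 : 0 ≤ Gm.trace :=
    le_trans (Finset.sum_nonneg fun i _ => mul_self_nonneg (μ i)) htrGm
  have hq1 : μ ⬝ᵥ Sm *ᵥ μ ≤ μ ⬝ᵥ GS *ᵥ μ := by
    have h := hSmbd.dotProduct_mulVec_nonneg μ
    rw [star_trivial, Matrix.sub_mulVec, dotProduct_sub] at h
    linarith
  have hq2 : μ ⬝ᵥ GS *ᵥ μ ≤ lamMax hGS.isHermitian * (μ ⬝ᵥ μ) := aux_rayleigh _ μ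
  have hq3 : μ ⬝ᵥ μ = ∑ i, μ i * μ i := by simp [dotProduct]
  have hμSmμ : μ ⬝ᵥ Sm *ᵥ μ ≤ lamMax hGS.isHermitian * Gm.trace := by
    refine le_trans (le_trans hq1 hq2) ?_
    rw [hq3]
    exact mul_le_mul_of_nonneg_left htrGm hlam0
  have htrsq : Sm.trace^2 ≤ GS.trace^2 := pow_le_pow_left₀ htrSm0 htrGS 2
  set B := GS.trace ^ 2 + lamMax hGS.isHermitian * Gm.trace with hB
  have hEg : ∫ ω, ∑ i, ∑ j, ((N:ℝ)⁻¹ * (∑ k, Z k ω i * Z k ω j) - m i j)^2 ∂P ≤ 2*B/N := by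
    rw [hgval, hB]
    refine (div_le_div_iff_of_pos_right hNpos).mpr ?_
    linarith
  have hmark := mul_meas_ge_le_integral_of_nonneg
    (ae_of_all _ fun ω => Finset.sum_nonneg fun i _ => Finset.sum_nonneg fun j _ => sq_nonneg _)
    hgint (ε^2)
  have hAm : MeasurableSet {ω | ε^2 ≤ ∑ i, ∑ j,
      ((N:ℝ)⁻¹ * (∑ k, Z k ω i * Z k ω j) - m i j)^2} :=
    measurableSet_le measurable_const hgmeas
  have hPA : (P {ω | ε^2 ≤ ∑ i, ∑ j,
      ((N:ℝ)⁻¹ * (∑ k, Z k ω i * Z k ω j) - m i j)^2}).toReal ≤ 2*B/N/ε^2 := by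
    rw [le_div_iff₀ (by positivity : (0:ℝ) < ε^2)]
    calc _ * ε^2 = ε^2 * _ := mul_comm _ _
      _ ≤ _ := le_trans hmark hEg
  have hsub : {ω | ε^2 ≤ ∑ i, ∑ j, ((N:ℝ)⁻¹ * (∑ k, Z k ω i * Z k ω j) - m i j)^2}ᶜ ⊆
      {ω | (GS + Gm + ε • (1 : Matrix (Fin n) (Fin n) ℝ)
        - (N : ℝ)⁻¹ • ∑ i, vecMulVec (Z i ω) (Z i ω)).PosSemidef} := by
    intro ω hω
    have hg : ∑ i, ∑ j, ((N:ℝ)⁻¹ * (∑ k, Z k ω i * Z k ω j) - m i j)^2 ≤ ε^2 :=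
      le_of_lt (lt_of_not_ge hω)
    set D := ((N : ℝ)⁻¹ • ∑ k, vecMulVec (Z k ω) (Z k ω)) - (Sm + vecMulVec μ μ) with hD
    have hDentry : ∀ i j, D i j = (N:ℝ)⁻¹ * (∑ k, Z k ω i * Z k ω j) - m i j := by
      intro i j
      rw [hD]
      simp [Matrix.sub_apply, Matrix.add_apply, Matrix.smul_apply, Matrix.sum_apply,
        Matrix.vecMulVec_apply, hm_eq i j, smul_eq_mul]
    have hDsum : ∑ i, ∑ j, D i j^2 ≤ ε^2 := by
      calc ∑ i, ∑ j, D i j^2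
          = ∑ i, ∑ j, ((N:ℝ)⁻¹ * (∑ k, Z k ω i * Z k ω j) - m i j)^2 :=
            Finset.sum_congr rfl fun i _ => Finset.sum_congr rfl fun j _ => by rw [hDentry]
        _ ≤ ε^2 := hg
    have hDsymm : ∀ i j, D i j = D j i := by
      intro i j
      rw [hDentry i j, hDentry j i]
      have hms : m i j = m j i := by
        have h1 : (fun ω => ς ω i * ς ω j) = fun ω => ς ω j * ς ω i :=
          funext fun ω => mul_comm _ _
        simp only [hmdef]
        rw [h1]
      rw [hms]
      congr 2
      exact Finset.sum_congr rfl fun k _ => mul_comm _ _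
    have h3 : (ε • (1 : Matrix (Fin n) (Fin n) ℝ) - D).PosSemidef := by
      refine Matrix.PosSemidef.of_dotProduct_mulVec_nonneg ?_ ?_
      · ext i j
        rw [Matrix.conjTranspose_apply, star_trivial]
        simp only [Matrix.sub_apply, Matrix.smul_apply, Matrix.one_apply, smul_eq_mul]
        rw [hDsymm j i]
        congr 1
        by_cases h : i = j
        · subst h; rfl
        · rw [if_neg h, if_neg (Ne.symm h)]
      · intro x
        rw [star_trivial, Matrix.sub_mulVec, dotProduct_sub, Matrix.smul_mulVec,
          Matrix.one_mulVec, dotProduct_smul, smul_eq_mul]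
        have := aux_frob_quad hε.le hDsum x
        linarith
    have hfinal : GS + Gm + ε • (1 : Matrix (Fin n) (Fin n) ℝ)
        - (N : ℝ)⁻¹ • ∑ k, vecMulVec (Z k ω) (Z k ω)
        = (GS - Sm) + ((Gm - vecMulVec μ μ) + (ε • (1 : Matrix (Fin n) (Fin n) ℝ) - D)) := by
      rw [hD]; abel
    rw [Set.mem_setOf_eq, hfinal]
    exact hSmbd.add (hμbd.add h3)
  have hPc : (P ({ω | ε^2 ≤ ∑ i, ∑ j,
      ((N:ℝ)⁻¹ * (∑ k, Z k ω i * Z k ω j) - m i j)^2}ᶜ)).toReal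
      = 1 - (P {ω | ε^2 ≤ ∑ i, ∑ j,
      ((N:ℝ)⁻¹ * (∑ k, Z k ω i * Z k ω j) - m i j)^2}).toReal := by
    rw [measure_compl hAm (measure_ne_top _ _), measure_univ,
      ENNReal.toReal_sub_of_le prob_le_one ENNReal.one_ne_top, ENNReal.toReal_one]
  have hmono := ENNReal.toReal_mono (measure_ne_top P _) (measure_mono hsub)
  have harith : 2/(↑N * ε^2) * B = 2*B/↑N/ε^2 := by
    field_simp
  linarith
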